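/- Let N ≥ 2, let φ be an A_N-positive primitive automorphism of the free group F_N, and let k ≥ 1 and a generator a be such that φ^k(a) = a * s for some pure positive word s (i.e. the reduced word of φ^k(a) is the letter a followed without cancellation by a nonempty positive word). Then for every n ≥ 0 the reduced word of φ^{kn}(a) is a proper prefix of the reduced word of φ^{k(n+1)}(a), the lengths |φ^{kn}(a)| tend to infinity, and the infinite word Y : ℕ → A_N defined by letting Y_i be the (positive) letter at position i of the reduced word of φ^{k(i+1)}(a) is not periodic: there is no integer q ≥ 1 such that Y_{i+q} = Y_i for all i ∈ ℕ. (One-sided formulation of Proposition 1.2 of the paper: an A_N-positive primitive automorphism is not S-periodic.) -/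

import Mathlib

/-- A word of the free group is pure positive if its reduced word is nonempty
and all its letters are positive. -/
def PurePos {N : ℕ} (v : FreeGroup (Fin N)) : Prop :=
  v.toWord ≠ [] ∧ ∀ l ∈ v.toWord, l.2 = true

/-- An automorphism of the free group is `A_N`-positive if the image of each
generator is pure positive. -/
def IsPositive {N : ℕ} (φ : MulAut (FreeGroup (Fin N))) : Prop :=
  ∀ a : Fin N, PurePos (φ (FreeGroup.of a))

/-- An `A_N`-positive automorphism is primitive if some power sends each generator
to a word containing every positive letter. -/
def IsPrimitive {N : ℕ} (φ : MulAut (FreeGroup (Fin N))) : Prop :=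
  ∃ k : ℕ, 1 ≤ k ∧ ∀ a b : Fin N, (b, true) ∈ ((φ ^ k) (FreeGroup.of a)).toWord

namespace NSPAux

variable {α : Type*} [DecidableEq α]

lemma reduce_pos : ∀ L : List (α × Bool), (∀ l ∈ L, l.2 = true) → FreeGroup.reduce L = L := by
  intro L
  induction L with
  | nil => intro _; rfl
  | cons x L ih =>
    intro hL
    have hx : x.2 = true := hL x (by simp)
    have hL' : ∀ l ∈ L, l.2 = true := fun l hl => hL l (by simp [hl])
    rw [FreeGroup.reduce.cons, ih hL']
    cases L with
    | nil => rfl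
    | cons y t =>
      have hy : y.2 = true := hL' y (by simp)
      simp [hx, hy]

lemma toWord_mk_pos (L : List (α × Bool)) (h : ∀ l ∈ L, l.2 = true) :
    (FreeGroup.mk L).toWord = L := by
  rw [FreeGroup.toWord_mk, reduce_pos L h]

lemma toWord_mul_pos (x y : FreeGroup α) (hx : ∀ l ∈ x.toWord, l.2 = true)
    (hy : ∀ l ∈ y.toWord, l.2 = true) : (x * y).toWord = x.toWord ++ y.toWord := by
  conv_lhs => rw [← FreeGroup.mk_toWord (x := x), ← FreeGroup.mk_toWord (x := y)]
  rw [FreeGroup.mul_mk]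
  refine toWord_mk_pos _ ?_
  intro l hl
  rcases List.mem_append.1 hl with h | h
  · exact hx l h
  · exact hy l h

lemma mk_cons (b : α) (L : List (α × Bool)) :
    FreeGroup.mk ((b, true) :: L) = FreeGroup.of b * FreeGroup.mk L := by
  rw [show FreeGroup.of b = FreeGroup.mk [(b, true)] from rfl, FreeGroup.mul_mk]
  rfl

variable {N : ℕ}

lemma posAux (ψ : MulAut (FreeGroup (Fin N))) (hψ : IsPositive ψ) :
    ∀ L : List ((Fin N) × Bool), (∀ l ∈ L, l.2 = true) →
      (∀ l ∈ (ψ (FreeGroup.mk L)).toWord, l.2 = true) ∧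
      L.length ≤ (ψ (FreeGroup.mk L)).toWord.length := by
  intro L
  induction L with
  | nil =>
    intro _
    rw [← FreeGroup.one_eq_mk, _root_.map_one, FreeGroup.toWord_one]
    exact ⟨by simp, by simp⟩
  | cons x L ih =>
    intro hL
    obtain ⟨b, bb⟩ := x
    have hx : bb = true := hL (b, bb) (by simp)
    subst hx
    have hL' : ∀ l ∈ L, l.2 = true := fun l hl => hL l (by simp [hl])
    obtain ⟨ih1, ih2⟩ := ih hL'
    have hb := hψ b
    rw [mk_cons, _root_.map_mul, toWord_mul_pos _ _ hb.2 ih1]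
    constructor
    · intro l hl
      rcases List.mem_append.1 hl with h | h
      · exact hb.2 l h
      · exact ih1 l h
    · rw [List.length_append, List.length_cons]
      have h1 : 1 ≤ (ψ (FreeGroup.of b)).toWord.length :=
        List.length_pos_iff.2 hb.1
      omega

lemma allPos_map (ψ : MulAut (FreeGroup (Fin N))) (hψ : IsPositive ψ)
    (x : FreeGroup (Fin N)) (hx : ∀ l ∈ x.toWord, l.2 = true) :
    (∀ l ∈ (ψ x).toWord, l.2 = true) ∧ x.toWord.length ≤ (ψ x).toWord.length := by
  have := posAux ψ hψ x.toWord hx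
  rwa [FreeGroup.mk_toWord] at this

lemma isPositive_pow (φ : MulAut (FreeGroup (Fin N))) (hφ : IsPositive φ) :
    ∀ m : ℕ, IsPositive (φ ^ m) := by
  intro m
  induction m with
  | zero =>
    intro a
    rw [pow_zero]
    show PurePos ((1 : MulAut (FreeGroup (Fin N))) (FreeGroup.of a))
    rw [MulAut.one_apply]
    exact ⟨by rw [FreeGroup.toWord_of]; simp, by rw [FreeGroup.toWord_of]; simp⟩
  | succ m ih =>
    intro a
    rw [pow_succ, MulAut.mul_apply]
    have h1 := hφ a
    obtain ⟨h2, h3⟩ := allPos_map (φ ^ m) ih (φ (FreeGroup.of a)) h1.2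
    refine ⟨?_, h2⟩
    have h4 : 1 ≤ (φ (FreeGroup.of a)).toWord.length := List.length_pos_iff.2 h1.1
    intro hne
    rw [hne] at h3
    simp only [List.length_nil, Nat.le_zero] at h3
    omega

lemma psi_of_eq (ψ : MulAut (FreeGroup (Fin N))) (a : Fin N) (s : FreeGroup (Fin N))
    (hs : PurePos s) (h : (ψ (FreeGroup.of a)).toWord = (a, true) :: s.toWord) :
    ψ (FreeGroup.of a) = FreeGroup.of a * s := by
  apply FreeGroup.toWord_injective
  rw [h, toWord_mul_pos _ _ (by rw [FreeGroup.toWord_of]; simp) hs.2, FreeGroup.toWord_of]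
  rfl

lemma chain (ψ : MulAut (FreeGroup (Fin N))) (hψ : IsPositive ψ) (a : Fin N)
    (s : FreeGroup (Fin N)) (hs : PurePos s)
    (h : (ψ (FreeGroup.of a)).toWord = (a, true) :: s.toWord) (n : ℕ) :
    ((ψ ^ (n + 1)) (FreeGroup.of a)).toWord
      = ((ψ ^ n) (FreeGroup.of a)).toWord ++ ((ψ ^ n) s).toWord := by
  have hofa : ∀ l ∈ (FreeGroup.of a).toWord, l.2 = true := by
    rw [FreeGroup.toWord_of]; simp
  have hpow := isPositive_pow ψ hψ n
  rw [pow_succ, MulAut.mul_apply, psi_of_eq ψ a s hs h, _root_.map_mul]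
  exact toWord_mul_pos _ _ (allPos_map _ hpow _ hofa).1 (allPos_map _ hpow _ hs.2).1

lemma s_len_pos (ψ : MulAut (FreeGroup (Fin N))) (hψ : IsPositive ψ)
    (s : FreeGroup (Fin N)) (hs : PurePos s) (n : ℕ) :
    1 ≤ (((ψ ^ n) s).toWord).length := by
  have := (allPos_map _ (isPositive_pow ψ hψ n) s hs.2).2
  have h1 : 1 ≤ s.toWord.length := List.length_pos_iff.2 hs.1
  omega

/-- The exponent-sum homomorphism. -/
def expSum (b : Fin N) : FreeGroup (Fin N) →* Multiplicative ℤ :=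
  FreeGroup.lift (fun c => Multiplicative.ofAdd (if c = b then (1 : ℤ) else 0))

def eCt (b : Fin N) (x : FreeGroup (Fin N)) : ℤ := Multiplicative.toAdd (expSum b x)

lemma eCt_mul (b : Fin N) (x y : FreeGroup (Fin N)) :
    eCt b (x * y) = eCt b x + eCt b y := by
  unfold eCt
  rw [_root_.map_mul, toAdd_mul]

lemma eCt_pow (b : Fin N) (x : FreeGroup (Fin N)) (m : ℕ) :
    eCt b (x ^ m) = m * eCt b x := by
  unfold eCt
  rw [_root_.map_pow, toAdd_pow, nsmul_eq_mul]

lemma eCt_of (b c : Fin N) : eCt b (FreeGroup.of c) = if c = b then 1 else 0 := by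
  unfold eCt expSum
  rw [FreeGroup.lift_apply_of]
  rfl

lemma eCt_mk_nonneg (b : Fin N) :
    ∀ L : List ((Fin N) × Bool), (∀ l ∈ L, l.2 = true) → 0 ≤ eCt b (FreeGroup.mk L) := by
  intro L
  induction L with
  | nil =>
    intro _
    rw [← FreeGroup.one_eq_mk]
    simp [eCt, expSum]
  | cons x L ih =>
    intro hL
    obtain ⟨c, cc⟩ := x
    have hx : cc = true := hL (c, cc) (by simp)
    subst hx
    have hL' : ∀ l ∈ L, l.2 = true := fun l hl => hL l (by simp [hl])
    rw [mk_cons, eCt_mul, eCt_of]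
    have := ih hL'
    split <;> omega

end NSPAux

open NSPAux in
/-- One-sided form of the non-`S`-periodicity of an `A_N`-positive primitive
automorphism: if `φ^k(a) = a * s` with `s` pure positive and no cancellation, then
the reduced words of `φ^{kn}(a)` form a strictly increasing chain of prefixes whose
lengths tend to infinity, and the resulting infinite word `Y` (whose `i`-th letter
is the letter at position `i` of `φ^{k(i+1)}(a)`) is not periodic. -/
theorem not_S_periodic {N : ℕ} (hN : 2 ≤ N)
    (φ : MulAut (FreeGroup (Fin N))) (hpos : IsPositive φ) (hprim : IsPrimitive φ)
    (k : ℕ) (hk : 1 ≤ k) (a : Fin N)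
    (s : FreeGroup (Fin N)) (hs : PurePos s)
    (h : ((φ ^ k) (FreeGroup.of a)).toWord = (a, true) :: s.toWord) :
    (∀ n : ℕ,
      ((φ ^ (k * n)) (FreeGroup.of a)).toWord <+:
        ((φ ^ (k * (n + 1))) (FreeGroup.of a)).toWord ∧
      ((φ ^ (k * n)) (FreeGroup.of a)).toWord.length <
        ((φ ^ (k * (n + 1))) (FreeGroup.of a)).toWord.length) ∧
    Filter.Tendsto (fun n : ℕ => ((φ ^ (k * n)) (FreeGroup.of a)).toWord.length)
      Filter.atTop Filter.atTop ∧
    ∀ Y : ℕ → Fin N,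
      (∀ i : ℕ, ((φ ^ (k * (i + 1))) (FreeGroup.of a)).toWord[i]? = some (Y i, true)) →
      ¬ ∃ q : ℕ, 1 ≤ q ∧ ∀ i : ℕ, Y (i + q) = Y i := by
  classical
  set ψ : MulAut (FreeGroup (Fin N)) := φ ^ k with hψdef
  have hψ : IsPositive ψ := isPositive_pow φ hpos k
  have hkey : (ψ (FreeGroup.of a)).toWord = (a, true) :: s.toWord := h
  -- the words and their lengths
  set u : ℕ → List ((Fin N) × Bool) := fun n => ((ψ ^ n) (FreeGroup.of a)).toWord with hu_def
  set L : ℕ → ℕ := fun n => (u n).length with hL_def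
  have hpowmul : ∀ n : ℕ, (φ ^ (k * n)) (FreeGroup.of a) = (ψ ^ n) (FreeGroup.of a) := by
    intro n; rw [hψdef, ← pow_mul]
  have hchain : ∀ n : ℕ, u (n + 1) = u n ++ ((ψ ^ n) s).toWord :=
    fun n => chain ψ hψ a s hs hkey n
  have hslen : ∀ n : ℕ, 1 ≤ (((ψ ^ n) s).toWord).length := s_len_pos ψ hψ s hs
  have hLlt : ∀ n : ℕ, L n < L (n + 1) := by
    intro n
    simp only [hL_def, hchain n, List.length_append]
    have := hslen n
    omega
  have hprefix1 : ∀ n : ℕ, u n <+: u (n + 1) := fun n => ⟨_, (hchain n).symm⟩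
  have hprefix : ∀ n m : ℕ, n ≤ m → u n <+: u m := by
    intro n m hnm
    induction m with
    | zero =>
      have : n = 0 := Nat.le_zero.1 hnm
      subst this; exact List.prefix_refl _
    | succ m ih =>
      rcases Nat.lt_or_ge n (m + 1) with hlt | hge
      · exact (ih (Nat.lt_succ_iff.1 hlt)).trans (hprefix1 m)
      · have : n = m + 1 := le_antisymm hnm hge
        subst this; exact List.prefix_refl _
  have hLge : ∀ n : ℕ, n < L n := by
    intro n
    induction n with
    | zero =>
      show 0 < (u 0).length
      simp only [hu_def, pow_zero, MulAut.one_apply, FreeGroup.toWord_of]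
      simp
    | succ n ih =>
      have := hLlt n
      omega
  have hupos : ∀ n : ℕ, ∀ l ∈ u n, l.2 = true := by
    intro n
    have := isPositive_pow ψ hψ n a
    exact this.2
  -- part 1
  have part1 : ∀ n : ℕ,
      ((φ ^ (k * n)) (FreeGroup.of a)).toWord <+:
        ((φ ^ (k * (n + 1))) (FreeGroup.of a)).toWord ∧
      ((φ ^ (k * n)) (FreeGroup.of a)).toWord.length <
        ((φ ^ (k * (n + 1))) (FreeGroup.of a)).toWord.length := by
    intro n
    rw [hpowmul n, hpowmul (n + 1)]
    exact ⟨hprefix1 n, hLlt n⟩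
  refine ⟨part1, ?_, ?_⟩
  · -- tendsto
    have hmono : ∀ n : ℕ, n ≤ ((φ ^ (k * n)) (FreeGroup.of a)).toWord.length := by
      intro n
      rw [hpowmul n]
      exact (hLge n).le
    exact Filter.tendsto_atTop_mono hmono Filter.tendsto_id
  · -- non-periodicity
    intro Y hY0
    have hY : ∀ i : ℕ, (u (i + 1))[i]? = some (Y i, true) := by
      intro i
      have := hY0 i
      rwa [hpowmul (i + 1)] at this
    rintro ⟨q, hq1, hq⟩
    set f : ℕ → (Fin N) × Bool := fun i => (Y i, true) with hf_def
    set P : ℕ → List ((Fin N) × Bool) := fun n => (List.range n).map f with hP_def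
    have hPlen : ∀ n, (P n).length = n := by intro n; simp [hP_def]
    have hPpos : ∀ n, ∀ l ∈ P n, l.2 = true := by
      intro n l hl
      simp only [hP_def, List.mem_map] at hl
      obtain ⟨i, _, rfl⟩ := hl
      rfl
    -- stability of letters
    have hstab : ∀ n i : ℕ, i < L n → (u n)[i]? = some (Y i, true) := by
      intro n i hi
      set m := max n (i + 1) with hm
      obtain ⟨t, ht⟩ := hprefix n m (le_max_left _ _)
      obtain ⟨t', ht'⟩ := hprefix (i + 1) m (le_max_right _ _)
      have h1 : (u m)[i]? = (u n)[i]? := by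
        rw [← ht, List.getElem?_append_left hi]
      have h2 : (u m)[i]? = (u (i + 1))[i]? := by
        rw [← ht', List.getElem?_append_left ?_]
        have := hLge (i + 1)
        simp only [hL_def] at this
        omega
      rw [← h1, h2, hY i]
    have hu : ∀ n : ℕ, u n = P (L n) := by
      intro n
      apply List.ext_getElem
      · rw [hPlen]
      · intro i h1 h2
        have h3 := hstab n i h1
        rw [List.getElem?_eq_getElem h1] at h3
        have h4 : (u n)[i] = (Y i, true) := Option.some.inj h3
        rw [h4]
        simp [hP_def, hf_def]
    -- prefixes of P are P
    have hPtake : ∀ t n : ℕ, t ≤ n → (P n).take t = P t := by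
      intro t n htn
      simp only [hP_def, ← List.map_take, List.take_range]
      rw [show t ⊓ n = t from min_eq_left htn]
    have hPprefix : ∀ (A : List ((Fin N) × Bool)) (n : ℕ), A <+: P n → A = P A.length := by
      intro A n hA
      have h1 : A = (P n).take A.length := List.prefix_iff_eq_take.1 hA
      have h2 : A.length ≤ n := by
        have := hA.length_le
        rwa [hPlen] at this
      conv_lhs => rw [h1]
      exact hPtake _ _ h2
    -- iterated periodicity
    have hYper : ∀ m i : ℕ, Y (i + q * m) = Y i := by
      intro m
      induction m with
      | zero => intro i; simp
      | succ m ih =>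
        intro i
        have he : i + q * (m + 1) = (i + q) + q * m := by ring
        rw [he, ih (i + q), hq i]
    -- the period word as a group element
    set w : FreeGroup (Fin N) := FreeGroup.mk (P q) with hw_def
    have hw : w.toWord = P q := toWord_mk_pos _ (hPpos q)
    have hPadd : ∀ m : ℕ, P (q * m) ++ P q = P (q * (m + 1)) := by
      intro m
      have h1 : q * (m + 1) = q * m + q := by ring
      rw [h1]
      simp only [hP_def, List.range_add, List.map_append, List.map_map]
      congr 1
      apply List.map_congr_left
      intro i hi
      simp only [Function.comp_apply, hf_def]
      have : q * m + i = i + q * m := by ring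
      rw [this, hYper m i]
    have hwpow : ∀ m : ℕ, (w ^ m).toWord = P (q * m) := by
      intro m
      induction m with
      | zero => simp [FreeGroup.toWord_one, hP_def]
      | succ m ih =>
        rw [pow_succ, toWord_mul_pos _ _ (by rw [ih]; exact hPpos _) (by rw [hw]; exact hPpos _),
          ih, hw, hPadd m]
    -- ψ maps P-words to P-words
    have hsplitP : ∀ x : FreeGroup (Fin N), x.toWord = P (x.toWord.length) →
        (ψ x).toWord = P ((ψ x).toWord.length) := by
      intro x hx
      set t := x.toWord.length with ht_def
      have htL : t ≤ L t := (hLge t).le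
      have hxw : x.toWord = (u t).take t := by
        rw [hu t, hPtake t (L t) htL, ← hx]
      have hdroppos : ∀ l ∈ (u t).drop t, l.2 = true := by
        intro l hl
        exact hupos t l ((List.drop_sublist _ _).mem hl)
      have hdec : (ψ ^ t) (FreeGroup.of a) = x * FreeGroup.mk ((u t).drop t) := by
        apply FreeGroup.toWord_injective
        rw [toWord_mul_pos _ _ (by rw [hx]; exact hPpos _) (by
            rw [toWord_mk_pos _ hdroppos]; exact hdroppos),
          toWord_mk_pos _ hdroppos, hxw, List.take_append_drop]
      have hstep : u (t + 1) = (ψ x).toWord ++ (ψ (FreeGroup.mk ((u t).drop t))).toWord := by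
        have h1 : (ψ ^ (t + 1)) (FreeGroup.of a) = ψ ((ψ ^ t) (FreeGroup.of a)) := by
          rw [pow_succ', MulAut.mul_apply]
        show ((ψ ^ (t + 1)) (FreeGroup.of a)).toWord = _
        rw [h1, hdec, _root_.map_mul]
        exact toWord_mul_pos _ _
          (allPos_map _ hψ _ (by rw [hx]; exact hPpos _)).1
          (allPos_map _ hψ _ (by rw [toWord_mk_pos _ hdroppos]; exact hdroppos)).1
      have hpref : (ψ x).toWord <+: P (L (t + 1)) := by
        rw [← hu (t + 1), hstep]
        exact ⟨_, rfl⟩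
      exact hPprefix _ _ hpref
    -- powers of ψ w
    set Q : ℕ := (ψ w).toWord.length with hQ_def
    have hψw : (ψ w).toWord = P Q := by
      apply hsplitP
      rw [hw, hPlen]
    have hψwpos : ∀ l ∈ (ψ w).toWord, l.2 = true := by rw [hψw]; exact hPpos _
    have hψwm : ∀ m : ℕ, ((ψ w) ^ m).toWord = P (((ψ w) ^ m).toWord.length) := by
      intro m
      rw [← _root_.map_pow]
      apply hsplitP
      rw [hwpow m, hPlen]
    have hψwlen : ∀ m : ℕ, ((ψ w) ^ m).toWord.length = m * Q := by
      intro m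
      induction m with
      | zero => simp [FreeGroup.toWord_one]
      | succ m ih =>
        rw [pow_succ, toWord_mul_pos _ _ (by rw [hψwm m]; exact hPpos _) hψwpos,
          List.length_append, ih]
        ring
    -- the key identity
    have hkeyid : (ψ w) ^ q = w ^ Q := by
      apply FreeGroup.toWord_injective
      rw [hψwm q, hψwlen q, hwpow Q]
    -- Y 0 = a
    have hY0a : Y 0 = a := by
      have h1 := hY 0
      have h2 : u 1 = (a, true) :: s.toWord := by
        show ((ψ ^ 1) (FreeGroup.of a)).toWord = _
        rw [pow_one]; exact hkey
      rw [h2] at h1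
      simp only [List.getElem?_cons_zero] at h1
      exact congrArg Prod.fst (Option.some.inj h1).symm
    -- Q > q
    obtain ⟨q', rfl⟩ : ∃ q', q = q' + 1 := ⟨q - 1, by omega⟩
    have hPq : P (q' + 1) = (a, true) :: (List.range q').map (f ∘ Nat.succ) := by
      have h0 : f 0 = (a, true) := by rw [hf_def]; simp [hY0a]
      simp only [hP_def, List.range_succ_eq_map, List.map_cons, List.map_map, h0]
    have hTpos : ∀ l ∈ (List.range q').map (f ∘ Nat.succ), l.2 = true := by
      intro l hl
      simp only [List.mem_map] at hl
      obtain ⟨i, _, rfl⟩ := hl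
      rfl
    have hwsplit : w = FreeGroup.of a * FreeGroup.mk ((List.range q').map (f ∘ Nat.succ)) := by
      rw [hw_def, hPq, mk_cons]
    have hQgt : q' + 1 < Q := by
      have h1 : (ψ w).toWord = (ψ (FreeGroup.of a)).toWord ++
          (ψ (FreeGroup.mk ((List.range q').map (f ∘ Nat.succ)))).toWord := by
        rw [hwsplit, _root_.map_mul]
        exact toWord_mul_pos _ _ (hψ a).2
          (allPos_map _ hψ _ (by rw [toWord_mk_pos _ hTpos]; exact hTpos)).1
      have h2 : (List.range q').length ≤
          (ψ (FreeGroup.mk ((List.range q').map (f ∘ Nat.succ)))).toWord.length := by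
        have := (posAux ψ hψ _ hTpos).2
        simpa using this
      have h3 : 1 ≤ s.toWord.length := List.length_pos_iff.2 hs.1
      have h4 : Q = (ψ (FreeGroup.of a)).toWord.length +
          (ψ (FreeGroup.mk ((List.range q').map (f ∘ Nat.succ)))).toWord.length := by
        rw [hQ_def, h1, List.length_append]
      rw [hkey] at h4
      simp only [List.length_cons, List.length_range] at h4 h2
      omega
    set q1 : ℕ := q' + 1 with hq1_def
    -- exponent count arithmetic
    set c : ℤ := eCt a w with hc_def
    have hc1 : 1 ≤ c := by
      rw [hc_def, hwsplit, eCt_mul]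
      have h5 : eCt a (FreeGroup.of a) = 1 := by rw [eCt_of]; simp
      have h6 := eCt_mk_nonneg a _ hTpos
      omega
    set x : ℕ → FreeGroup (Fin N) := fun n => ((ψ⁻¹) ^ n) w with hx_def
    have hx0 : x 0 = w := by simp [hx_def]; rfl
    have hrec : ∀ n : ℕ, (x n) ^ q1 = (x (n + 1)) ^ Q := by
      intro n
      have h1 := congrArg ((ψ⁻¹) ^ (n + 1)) hkeyid
      rw [_root_.map_pow, _root_.map_pow] at h1
      have h2 : ((ψ⁻¹) ^ (n + 1)) (ψ w) = x n := by
        rw [pow_succ, MulAut.mul_apply]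
        congr 1
        show ψ⁻¹ (ψ w) = w
        simp
      rw [h2] at h1
      exact h1
    have heq : ∀ n : ℕ, (q1 : ℤ) ^ n * c = (Q : ℤ) ^ n * eCt a (x n) := by
      intro n
      induction n with
      | zero => simp [hx0, hc_def]
      | succ n ih =>
        have h1 : (q1 : ℤ) * eCt a (x n) = (Q : ℤ) * eCt a (x (n + 1)) := by
          have := congrArg (eCt a) (hrec n)
          rwa [eCt_pow, eCt_pow] at this
        calc (q1 : ℤ) ^ (n + 1) * c = (q1 : ℤ) ^ n * c * q1 := by ring
          _ = (Q : ℤ) ^ n * eCt a (x n) * q1 := by rw [ih]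
          _ = (Q : ℤ) ^ n * ((q1 : ℤ) * eCt a (x n)) := by ring
          _ = (Q : ℤ) ^ n * ((Q : ℤ) * eCt a (x (n + 1))) := by rw [h1]
          _ = (Q : ℤ) ^ (n + 1) * eCt a (x (n + 1)) := by ring
    have hdvd : ∀ n : ℕ, (Q : ℤ) ^ n ∣ (q1 : ℤ) ^ n * c := by
      intro n
      exact ⟨eCt a (x n), heq n⟩
    -- reduce to coprime case
    set d : ℕ := Nat.gcd q1 Q with hd_def
    have hdpos : 0 < d := Nat.gcd_pos_of_pos_left _ (by omega)
    set q2 : ℕ := q1 / d with hq2_def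
    set Q2 : ℕ := Q / d with hQ2_def
    have hq1e : q1 = q2 * d := by
      rw [hq2_def, Nat.div_mul_cancel (Nat.gcd_dvd_left _ _)]
    have hQe : Q = Q2 * d := by
      rw [hQ2_def, Nat.div_mul_cancel (Nat.gcd_dvd_right _ _)]
    have hcop : Nat.Coprime q2 Q2 := Nat.coprime_div_gcd_div_gcd hdpos
    have hq2pos : 1 ≤ q2 := by
      rcases Nat.eq_zero_or_pos q2 with h0 | h0
      · rw [h0] at hq1e; omega
      · exact h0
    have hQ2gt : q2 < Q2 := by
      have : q2 * d < Q2 * d := by rw [← hq1e, ← hQe]; omega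
      exact lt_of_mul_lt_mul_right this (Nat.zero_le d)
    have hQ2ge2 : 2 ≤ Q2 := by omega
    have hdvd2 : ∀ n : ℕ, (Q2 : ℤ) ^ n ∣ c := by
      intro n
      have h1 := hdvd n
      rw [hq1e, hQe] at h1
      push_cast at h1
      rw [mul_pow, mul_pow] at h1
      have h2 : (Q2 : ℤ) ^ n * (d : ℤ) ^ n ∣ (q2 : ℤ) ^ n * c * (d : ℤ) ^ n := by
        have he : (q2 : ℤ) ^ n * (d : ℤ) ^ n * c = (q2 : ℤ) ^ n * c * (d : ℤ) ^ n := by ring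
        rwa [he] at h1
      have hdne : ((d : ℤ)) ^ n ≠ 0 := pow_ne_zero _ (by exact_mod_cast hdpos.ne')
      have h3 : (Q2 : ℤ) ^ n ∣ (q2 : ℤ) ^ n * c :=
        (mul_dvd_mul_iff_right hdne).1 h2
      have hcop' : IsCoprime ((Q2 : ℤ)) ((q2 : ℤ)) := by
        rw [Nat.isCoprime_iff_coprime]
        exact hcop.symm
      exact (hcop'.pow (m := n) (n := n)).dvd_of_dvd_mul_left h3
    -- contradiction
    have hfin : ∀ n : ℕ, (Q2 : ℤ) ^ n ≤ c := by
      intro n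
      exact Int.le_of_dvd (by omega) (hdvd2 n)
    have hbig := hfin c.toNat
    have h2n : (c.toNat : ℤ) < (2 : ℤ) ^ c.toNat := by
      have := @Nat.lt_two_pow_self c.toNat
      exact_mod_cast this
    have hle : (2 : ℤ) ^ c.toNat ≤ (Q2 : ℤ) ^ c.toNat := by
      apply pow_le_pow_left₀ (by norm_num)
      exact_mod_cast hQ2ge2
    have hct : (c.toNat : ℤ) = c := Int.toNat_of_nonneg (by omega)
    omega
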